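/- arXiv:2204.02616 — 2 statements merged into one kernel-verified Lean document; each statement's English description precedes it below -/
import Mathlib

section
/- The number m(d) of combinators over {M} of degree d avoiding the factor M (x_1 x_2) satisfies m(0) = m(1) = 1 and, for d >= 2, m(d) = sum over decompositions of a product minus a correction: equivalently m satisfies the Motzkin recurrence arising from F = 1 + z + z F^2 - z F, i.e., m(d) = (sum_{i=0}^{d-1} m(i) m(d-1-i)) - m(d-1) for d >= 2. -/
inductive MTerm : Type
  | M : MTerm
  | var : ℕ → MTerm
  | app : MTerm → MTerm → MTerm

/-- One-step rewrite of the Mockingbird system: replace a subterm `M s` by `s s`. -/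
inductive MStep : MTerm → MTerm → Prop
  | mock (s : MTerm) : MStep (.app .M s) (.app s s)
  | left {t t' : MTerm} (u : MTerm) : MStep t t' → MStep (.app t u) (.app t' u)
  | right (u : MTerm) {t t' : MTerm} : MStep t t' → MStep (.app u t) (.app u t')

/-- Rewrite order: reflexive-transitive closure of `MStep`. -/
def MLe : MTerm → MTerm → Prop := Relation.ReflTransGen MStep

/-- A term is a combinator when it contains no variable. -/
def NoVar : MTerm → Prop
  | .M => True
  | .var _ => False
  | .app a b => NoVar a ∧ NoVar b

/-- Subterm (factor) relation. -/
inductive MSub : MTerm → MTerm → Prop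
  | refl (t : MTerm) : MSub t t
  | left {s a : MTerm} (b : MTerm) : MSub s a → MSub s (.app a b)
  | right (a : MTerm) {s b : MTerm} : MSub s b → MSub s (.app a b)

/-- Height: maximal number of internal nodes on a root-to-leaf path. -/
def ht : MTerm → ℕ
  | .M => 0
  | .var _ => 0
  | .app a b => max (ht a) (ht b) + 1

/-- Degree: number of application (internal) nodes. -/
def deg : MTerm → ℕ
  | .M => 0
  | .var _ => 0
  | .app a b => deg a + deg b + 1

/-- Number of combinators over {M} of degree d avoiding the factor M (x₁ x₂). -/
noncomputable def mCount (d : ℕ) : ℕ :=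
  Nat.card {t : MTerm // NoVar t ∧ deg t = d ∧
    ∀ u v : MTerm, ¬ MSub (.app .M (.app u v)) t}

deriving instance DecidableEq for MTerm

def isApp : MTerm → Bool
  | .app _ _ => true
  | _ => false

def avoidB : MTerm → Bool
  | .M => true
  | .var _ => true
  | .app a b => avoidB a && avoidB b && !(a == .M && isApp b)

lemma msub_M {s : MTerm} : MSub s .M ↔ s = .M := by
  constructor
  · intro h; cases h; rfl
  · rintro rfl; exact .refl _

lemma msub_var {s : MTerm} {n : ℕ} : MSub s (.var n) ↔ s = .var n := by
  constructor
  · intro h; cases h; rfl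
  · rintro rfl; exact .refl _

lemma msub_app {s a b : MTerm} : MSub s (.app a b) ↔ s = .app a b ∨ MSub s a ∨ MSub s b := by
  constructor
  · intro h; rcases h with _ | ⟨_, h⟩ | ⟨_, h⟩
    · exact Or.inl rfl
    · exact Or.inr (Or.inl h)
    · exact Or.inr (Or.inr h)
  · rintro (rfl | h | h)
    · exact .refl _
    · exact .left _ h
    · exact .right _ h

lemma avoid_iff (t : MTerm) :
    (∀ u v : MTerm, ¬ MSub (.app .M (.app u v)) t) ↔ avoidB t = true := by
  induction t with
  | M => simp [avoidB, msub_M]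
  | var n => simp [avoidB, msub_var]
  | app a b iha ihb =>
    simp only [avoidB, Bool.and_eq_true, Bool.not_eq_true', Bool.and_eq_false_iff]
    constructor
    · intro h
      refine ⟨⟨iha.mp fun u v hs => h u v (.left _ hs),
        ihb.mp fun u v hs => h u v (.right _ hs)⟩, ?_⟩
      match a, b with
      | .M, .app u v => exact absurd (.refl _) (h u v)
      | .M, .M => simp [isApp]
      | .M, .var _ => simp [isApp]
      | .var _, _ => simp
      | .app _ _, _ => simp
    · rintro ⟨⟨ha, hb⟩, hn⟩ u v hs
      rcases msub_app.mp hs with heq | hs | hs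
      · obtain ⟨rfl, rfl⟩ : a = .M ∧ b = .app u v := by
          injection heq with h1 h2; exact ⟨h1.symm, h2.symm⟩
        simp [isApp] at hn
      · exact iha.mpr ha u v hs
      · exact ihb.mpr hb u v hs

def allF : ℕ → Finset MTerm
  | 0 => {.M}
  | (n+1) => allF n ∪ (allF n ×ˢ allF n).image fun p => MTerm.app p.1 p.2

lemma mem_allF : ∀ (n : ℕ) (t : MTerm), t ∈ allF n ↔ NoVar t ∧ ht t ≤ n := by
  intro n
  induction n with
  | zero =>
    intro t
    simp only [allF, Finset.mem_singleton]
    constructor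
    · rintro rfl; exact ⟨trivial, le_refl _⟩
    · rintro ⟨hv, hh⟩
      match t with
      | .M => rfl
      | .var k => exact absurd hv id
      | .app a b => simp [ht] at hh
  | succ n ih =>
    intro t
    simp only [allF, Finset.mem_union, Finset.mem_image, Finset.mem_product, Prod.exists]
    constructor
    · rintro (h | ⟨a, b, ⟨ha, hb⟩, rfl⟩)
      · obtain ⟨hv, hh⟩ := ih t |>.mp h
        exact ⟨hv, hh.trans (Nat.le_succ n)⟩
      · obtain ⟨hva, hha⟩ := ih a |>.mp ha
        obtain ⟨hvb, hhb⟩ := ih b |>.mp hb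
        exact ⟨⟨hva, hvb⟩, by simp [ht]; omega⟩
    · rintro ⟨hv, hh⟩
      match t with
      | .M => exact Or.inl ((ih _).mpr ⟨trivial, Nat.zero_le _⟩)
      | .var k => exact absurd hv id
      | .app a b =>
        refine Or.inr ⟨a, b, ⟨(ih a).mpr ⟨hv.1, ?_⟩, (ih b).mpr ⟨hv.2, ?_⟩⟩, rfl⟩
        · simp [ht] at hh; omega
        · simp [ht] at hh; omega

lemma ht_le_deg (t : MTerm) : ht t ≤ deg t := by
  induction t with
  | M => exact le_refl _
  | var n => exact le_refl _
  | app a b iha ihb => simp [ht, deg]; omega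

def G (d : ℕ) : Finset MTerm := (allF d).filter (fun t => deg t = d ∧ avoidB t = true)

lemma mem_G {d : ℕ} {t : MTerm} :
    t ∈ G d ↔ NoVar t ∧ deg t = d ∧ avoidB t = true := by
  simp only [G, Finset.mem_filter, mem_allF]
  constructor
  · rintro ⟨⟨hv, _⟩, hd, ha⟩; exact ⟨hv, hd, ha⟩
  · rintro ⟨hv, hd, ha⟩; exact ⟨⟨hv, hd ▸ ht_le_deg t⟩, hd, ha⟩

-- continuation, appended to aux.lean for testing
lemma noVar_deg_zero {t : MTerm} (hv : NoVar t) (hd : deg t = 0) : t = .M := by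
  match t with
  | .M => rfl
  | .var k => exact absurd hv id
  | .app a b => simp [deg] at hd

lemma isApp_of {t : MTerm} (hv : NoVar t) (hd : 1 ≤ deg t) : isApp t = true := by
  match t with
  | .M => simp [deg] at hd
  | .var k => exact absurd hv id
  | .app a b => rfl

lemma G_zero : G 0 = {MTerm.M} := by
  ext t
  simp only [mem_G, Finset.mem_singleton]
  constructor
  · rintro ⟨hv, hd, _⟩; exact noVar_deg_zero hv hd
  · rintro rfl; exact ⟨trivial, rfl, rfl⟩

lemma G_one : G 1 = {MTerm.app .M .M} := by
  ext t
  simp only [mem_G, Finset.mem_singleton]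
  constructor
  · rintro ⟨hv, hd, ha⟩
    match t with
    | .M => simp [deg] at hd
    | .var k => exact absurd hv id
    | .app a b =>
      simp only [deg] at hd
      have ha' : a = .M := noVar_deg_zero hv.1 (by omega)
      have hb' : b = .M := noVar_deg_zero hv.2 (by omega)
      rw [ha', hb']
  · rintro rfl; exact ⟨⟨trivial, trivial⟩, rfl, rfl⟩

lemma G_succ (e : ℕ) :
    G (e+1) = ((Finset.range (e+1)).biUnion fun i =>
      ((G i ×ˢ G (e-i)).filter fun p => ¬(p.1 = MTerm.M ∧ isApp p.2 = true))).image
      (fun p => MTerm.app p.1 p.2) := by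
  ext t
  simp only [Finset.mem_image, Finset.mem_biUnion, Finset.mem_filter, Finset.mem_product,
    Finset.mem_range, mem_G, Prod.exists]
  constructor
  · rintro ⟨hv, hd, ha⟩
    match t with
    | .M => simp [deg] at hd
    | .var k => exact absurd hv id
    | .app a b =>
      simp only [deg] at hd
      simp only [avoidB, Bool.and_eq_true, Bool.not_eq_true', Bool.and_eq_false_iff,
        beq_iff_eq, beq_eq_false_iff_ne, ne_eq, Bool.not_eq_true] at ha
      refine ⟨a, b, ⟨deg a, by omega, ⟨⟨⟨hv.1, rfl, ha.1.1⟩, hv.2, by omega, ha.1.2⟩, ?_⟩⟩, rfl⟩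
      rcases ha.2 with h | h
      · rintro ⟨rfl, _⟩; exact h rfl
      · rintro ⟨_, hb⟩; rw [h] at hb; exact absurd hb (by simp)
  · rintro ⟨a, b, ⟨i, hi, ⟨⟨⟨hva, hda, haa⟩, hvb, hdb, hab⟩, hnot⟩⟩, rfl⟩
    refine ⟨⟨hva, hvb⟩, by simp [deg]; omega, ?_⟩
    simp only [avoidB, Bool.and_eq_true, Bool.not_eq_true', Bool.and_eq_false_iff,
      beq_iff_eq, beq_eq_false_iff_ne, ne_eq, Bool.not_eq_true]
    refine ⟨⟨haa, hab⟩, ?_⟩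
    by_cases hM : a = MTerm.M
    · exact Or.inr (by simpa [hM] using fun h => hnot ⟨hM, h⟩)
    · exact Or.inl hM

lemma card_G_succ {e : ℕ} (he : 1 ≤ e) :
    (G (e+1)).card + (G e).card = ∑ i ∈ Finset.range (e+1), (G i).card * (G (e-i)).card := by
  rw [G_succ]
  rw [Finset.card_image_of_injOn (by
    rintro ⟨a, b⟩ - ⟨c, d⟩ - h
    injection h with h1 h2
    exact Prod.ext h1 h2)]
  rw [Finset.card_biUnion (by
    intro i hi j hj hij
    simp only [Finset.disjoint_left, Finset.mem_filter, Finset.mem_product]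
    rintro ⟨a, b⟩ ⟨⟨ha, _⟩, _⟩ ⟨⟨ha', _⟩, _⟩
    exact hij ((mem_G.mp ha).2.1 ▸ (mem_G.mp ha').2.1.symm ▸ rfl))]
  have hterm : ∀ i ∈ Finset.range (e+1),
      ((G i ×ˢ G (e-i)).filter fun p => ¬(p.1 = MTerm.M ∧ isApp p.2 = true)).card
      = if i = 0 then 0 else (G i).card * (G (e-i)).card := by
    intro i hi
    rcases Nat.eq_zero_or_pos i with rfl | hpos
    · rw [if_pos rfl, Finset.card_eq_zero, Finset.filter_eq_empty_iff]
      rintro ⟨a, b⟩ hp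
      simp only [Finset.mem_product] at hp
      obtain ⟨hva, hda, _⟩ := mem_G.mp hp.1
      obtain ⟨hvb, hdb, _⟩ := mem_G.mp hp.2
      simp only [Nat.sub_zero] at hdb
      have h1b : 1 ≤ deg b := by omega
      exact fun h => h ⟨noVar_deg_zero hva hda, isApp_of hvb h1b⟩
    · rw [if_neg (by omega), Finset.filter_true_of_mem, Finset.card_product]
      rintro ⟨a, b⟩ hp ⟨rfl, _⟩
      simp only [Finset.mem_product] at hp
      have := (mem_G.mp hp.1).2.1
      simp [deg] at this
      omega
  rw [Finset.sum_congr rfl hterm]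
  have h0 : (G 0).card = 1 := by rw [G_zero]; rfl
  rw [Finset.sum_range_succ' _ e, Finset.sum_range_succ' (fun i => (G i).card * (G (e-i)).card) e]
  simp [h0]

lemma mCount_eq (d : ℕ) : mCount d = (G d).card := by
  rw [mCount]
  have e : {t : MTerm // NoVar t ∧ deg t = d ∧
      ∀ u v : MTerm, ¬ MSub (.app .M (.app u v)) t} ≃ {t : MTerm // t ∈ G d} :=
    Equiv.subtypeEquivRight (fun t => by
      rw [mem_G, avoid_iff])
  rw [Nat.card_congr e, Nat.card_eq_fintype_card, Fintype.card_coe]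


/-- mCount satisfies the Motzkin recurrence:
m(0) = m(1) = 1 and m(d) = (∑_{i=0}^{d-1} m(i) m(d-1-i)) - m(d-1) for d ≥ 2. -/
theorem avoid_MApp_recurrence :
    mCount 0 = 1 ∧ mCount 1 = 1 ∧
    ∀ d : ℕ, 2 ≤ d →
      mCount d = (∑ i ∈ Finset.range d, mCount i * mCount (d - 1 - i)) - mCount (d - 1) := by
  refine ⟨by rw [mCount_eq, G_zero]; rfl, by rw [mCount_eq, G_one]; rfl, ?_⟩
  intro d hd
  obtain ⟨e, rfl⟩ : ∃ e, d = e + 1 := ⟨d - 1, by omega⟩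
  have he : 1 ≤ e := by omega
  have key := card_G_succ he
  simp only [mCount_eq, Nat.add_sub_cancel]
  omega
end

section
/- In the Mockingbird rewrite poset, each equivalence class under the rewrite equivalence has a unique minimal element and a unique maximal element with respect to the rewrite order. -/
deriving instance DecidableEq for MTerm

/-- Canonical maximal form. -/
def Fmax : MTerm → MTerm
  | .M => .M
  | .var n => .var n
  | .app a b =>
    let a' := Fmax a; let b' := Fmax b
    if a' = .M ∧ b' ≠ .M then .app b' b' else .app a' b'

/-- Canonical minimal form. -/
def Rmin : MTerm → MTerm
  | .M => .M
  | .var n => .var n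
  | .app a b =>
    let a' := Rmin a; let b' := Rmin b
    if a' = b' ∧ a' ≠ .M then .app .M a' else .app a' b'

def Stable (m : MTerm) : Prop := ∀ u, MStep m u → u = m
def CoStable (m : MTerm) : Prop := ∀ u, MStep u m → u = m

lemma mle_app_left {a a' : MTerm} (b : MTerm) (h : MLe a a') :
    MLe (.app a b) (.app a' b) :=
  Relation.ReflTransGen.lift (fun x => MTerm.app x b) (fun _ _ h => MStep.left b h) _ _ h

lemma mle_app_right (a : MTerm) {b b' : MTerm} (h : MLe b b') :
    MLe (.app a b) (.app a b') :=
  Relation.ReflTransGen.lift (fun x => MTerm.app a x) (fun _ _ h => MStep.right a h) _ _ h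

lemma mle_app {a a' b b' : MTerm} (ha : MLe a a') (hb : MLe b b') :
    MLe (.app a b) (.app a' b') :=
  Relation.ReflTransGen.trans (mle_app_left b ha) (mle_app_right a' hb)

lemma le_Fmax (t : MTerm) : MLe t (Fmax t) := by
  induction t with
  | M => exact Relation.ReflTransGen.refl
  | var n => exact Relation.ReflTransGen.refl
  | app a b iha ihb =>
    simp only [Fmax]
    split_ifs with h
    · have h1 : MLe (MTerm.app a b) (.app (Fmax a) (Fmax b)) := mle_app iha ihb
      rw [h.1] at h1
      exact Relation.ReflTransGen.trans h1
        (Relation.ReflTransGen.single (MStep.mock (Fmax b)))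
    · exact mle_app iha ihb

lemma Rmin_le (t : MTerm) : MLe (Rmin t) t := by
  induction t with
  | M => exact Relation.ReflTransGen.refl
  | var n => exact Relation.ReflTransGen.refl
  | app a b iha ihb =>
    simp only [Rmin]
    split_ifs with h
    · refine Relation.ReflTransGen.trans
        (Relation.ReflTransGen.single (MStep.mock (Rmin a))) ?_
      refine mle_app iha ?_
      rw [h.1]; exact ihb
    · exact mle_app iha ihb

lemma Fmax_step {t u : MTerm} (h : MStep t u) : Fmax t = Fmax u := by
  induction h with
  | mock s =>
    simp only [Fmax]
    by_cases hs : Fmax s = MTerm.M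
    · simp [hs]
    · simp [hs]
  | left u h ih => simp only [Fmax, ih]
  | right u h ih => simp only [Fmax, ih]

lemma Rmin_step {t u : MTerm} (h : MStep t u) : Rmin t = Rmin u := by
  induction h with
  | mock s =>
    simp only [Rmin]
    by_cases hs : Rmin s = MTerm.M
    · simp [hs]
    · simp [hs]
  | left u h ih => simp only [Rmin, ih]
  | right u h ih => simp only [Rmin, ih]

lemma Fmax_eqv {t u : MTerm} (h : Relation.EqvGen MStep t u) : Fmax t = Fmax u := by
  induction h with
  | rel a b h => exact Fmax_step h
  | refl => rfl
  | symm a b h ih => exact ih.symm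
  | trans a b c h1 h2 ih1 ih2 => exact ih1.trans ih2

lemma Rmin_eqv {t u : MTerm} (h : Relation.EqvGen MStep t u) : Rmin t = Rmin u := by
  induction h with
  | rel a b h => exact Rmin_step h
  | refl => rfl
  | symm a b h ih => exact ih.symm
  | trans a b c h1 h2 ih1 ih2 => exact ih1.trans ih2

lemma mle_eqv {a b : MTerm} (h : MLe a b) : Relation.EqvGen MStep a b := by
  induction h with
  | refl => exact Relation.EqvGen.refl a
  | tail h1 h2 ih => exact Relation.EqvGen.trans _ _ _ ih (Relation.EqvGen.rel _ _ h2)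

lemma stable_app {a b : MTerm} (ha : Stable a) (hb : Stable b)
    (hm : a = .M → b = .M) : Stable (.app a b) := by
  intro u h
  cases h with
  | mock s =>
    have : b = MTerm.M := hm rfl
    subst this; rfl
  | left v h => rw [ha _ h]
  | right v h => rw [hb _ h]

lemma stable_M : Stable .M := by intro u h; cases h
lemma stable_var (n : ℕ) : Stable (.var n) := by intro u h; cases h

lemma stable_Fmax (t : MTerm) : Stable (Fmax t) := by
  induction t with
  | M => exact stable_M
  | var n => exact stable_var n
  | app a b iha ihb =>
    simp only [Fmax]
    split_ifs with h
    · exact stable_app ihb ihb (fun hM => absurd hM h.2)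
    · refine stable_app iha ihb (fun hM => ?_)
      by_contra hb
      exact h ⟨hM, hb⟩

lemma stable_inv_left {a b : MTerm} (h : Stable (.app a b)) : Stable a := by
  intro u hu
  have := h _ (MStep.left b hu)
  injection this
lemma stable_inv_right {a b : MTerm} (h : Stable (.app a b)) : Stable b := by
  intro u hu
  have := h _ (MStep.right a hu)
  injection this
lemma stable_inv_M {b : MTerm} (h : Stable (.app .M b)) : b = .M := by
  have := h _ (MStep.mock b)
  injection this

lemma Fmax_of_stable {m : MTerm} (h : Stable m) : Fmax m = m := by
  induction m with
  | M => rfl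
  | var n => rfl
  | app a b iha ihb =>
    have fa := iha (stable_inv_left h)
    have fb := ihb (stable_inv_right h)
    simp only [Fmax, fa, fb]
    split_ifs with hc
    · exfalso
      rw [hc.1] at h
      exact hc.2 (stable_inv_M h)
    · rfl

lemma costable_app {a b : MTerm} (ha : CoStable a) (hb : CoStable b)
    (hm : a = b → a = .M) : CoStable (.app a b) := by
  intro u h
  cases h with
  | mock s =>
    rw [hm rfl]
  | left v h => rw [ha _ h]
  | right v h => rw [hb _ h]

lemma costable_M : CoStable .M := by intro u h; cases h
lemma costable_var (n : ℕ) : CoStable (.var n) := by intro u h; cases h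

lemma costable_Rmin (t : MTerm) : CoStable (Rmin t) := by
  induction t with
  | M => exact costable_M
  | var n => exact costable_var n
  | app a b iha ihb =>
    simp only [Rmin]
    split_ifs with h
    · exact costable_app costable_M iha (fun _ => rfl)
    · refine costable_app iha ihb (fun he => ?_)
      by_contra hM
      exact h ⟨he, hM⟩

lemma costable_inv_left {a b : MTerm} (h : CoStable (.app a b)) : CoStable a := by
  intro u hu
  have := h _ (MStep.left b hu)
  injection this
lemma costable_inv_right {a b : MTerm} (h : CoStable (.app a b)) : CoStable b := by
  intro u hu
  have := h _ (MStep.right a hu)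
  injection this
lemma costable_inv_eq {a : MTerm} (h : CoStable (.app a a)) : a = .M := by
  have := h _ (MStep.mock a)
  injection this with h1 h2
  exact h1.symm

lemma Rmin_of_costable {m : MTerm} (h : CoStable m) : Rmin m = m := by
  induction m with
  | M => rfl
  | var n => rfl
  | app a b iha ihb =>
    have fa := iha (costable_inv_left h)
    have fb := ihb (costable_inv_right h)
    simp only [Rmin, fa, fb]
    split_ifs with hc
    · exfalso
      rw [hc.1] at h
      exact hc.2 (hc.1.trans (costable_inv_eq h))
    · rfl

lemma mle_of_stable {m : MTerm} (hm : Stable m) : ∀ u, MLe m u → u = m := by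
  intro u h
  induction h with
  | refl => rfl
  | tail h1 h2 ih =>
    rw [ih] at h2
    exact hm _ h2

lemma mle_of_costable : ∀ {u m : MTerm}, MLe u m → CoStable m → u = m := by
  intro u m h
  induction h with
  | refl => intro _; rfl
  | tail h1 h2 ih =>
    intro hc
    have hb := hc _ h2
    subst hb
    exact ih hc

/-- In the Mockingbird rewrite poset, each equivalence class under the rewrite
equivalence has a unique minimal element and a unique maximal element. -/
theorem unique_min_max (t : MTerm) :
    (∃! m : MTerm, Relation.EqvGen MStep t m ∧
      ∀ u : MTerm, Relation.EqvGen MStep t u → MLe u m → u = m) ∧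
    (∃! m : MTerm, Relation.EqvGen MStep t m ∧
      ∀ u : MTerm, Relation.EqvGen MStep t u → MLe m u → u = m) := by
  constructor
  · refine ⟨Rmin t, ⟨Relation.EqvGen.symm _ _ (mle_eqv (Rmin_le t)), ?_⟩, ?_⟩
    · intro u _ hle
      exact mle_of_costable hle (costable_Rmin t)
    · rintro m' ⟨he, hmin⟩
      have hco : CoStable m' := by
        intro u hu
        exact hmin u (Relation.EqvGen.trans _ _ _ he
          (Relation.EqvGen.symm _ _ (Relation.EqvGen.rel _ _ hu)))
          (Relation.ReflTransGen.single hu)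
      calc m' = Rmin m' := (Rmin_of_costable hco).symm
        _ = Rmin t := (Rmin_eqv he).symm
  · refine ⟨Fmax t, ⟨mle_eqv (le_Fmax t), ?_⟩, ?_⟩
    · intro u _ hle
      exact mle_of_stable (stable_Fmax t) u hle
    · rintro m' ⟨he, hmax⟩
      have hst : Stable m' := by
        intro u hu
        exact hmax u (Relation.EqvGen.trans _ _ _ he (Relation.EqvGen.rel _ _ hu))
          (Relation.ReflTransGen.single hu)
      calc m' = Fmax m' := (Fmax_of_stable hst).symm
        _ = Fmax t := (Fmax_eqv he).symm
end
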